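/- Let T be a Hermitian positive definite matrix on a finite index set E with inverse T⁻¹, and let Λ ⊆ Δ ⊆ E. Then (T_Λ)⁻¹ ≤ ((T_Δ)⁻¹)_Λ ≤ (T⁻¹)_Λ in the Loewner order, where T_S denotes the principal submatrix of T indexed by S. -/

import Mathlib

open Matrix ComplexOrder

section Aux
set_option linter.unusedSectionVars false
variable {m n : Type*} [Fintype m] [Fintype n] [DecidableEq m] [DecidableEq n]

private def Pmat (f : n → m) : Matrix m n ℂ := Matrix.of fun j i => if f i = j then 1 else 0

private lemma Pmat_conj_mul (f : n → m) (M : Matrix m m ℂ) :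
    (Pmat f)ᴴ * M * (Pmat f) = M.submatrix f f := by
  ext i j
  simp [Pmat, Matrix.mul_apply, Matrix.conjTranspose_apply, apply_ite, Finset.sum_ite_eq,
    Finset.sum_ite_eq', mul_comm]

private lemma Pmat_conj_mul_self {f : n → m} (hf : Function.Injective f) :
    (Pmat f)ᴴ * (Pmat f) = 1 := by
  ext i j
  simp only [Pmat, Matrix.mul_apply, Matrix.conjTranspose_apply, Matrix.of_apply]
  rcases eq_or_ne i j with rfl | h
  · simp [Finset.sum_ite_eq']
  · have hne : f i ≠ f j := fun hc => h (hf hc)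
    simp only [Matrix.one_apply_ne h]
    rw [Finset.sum_eq_zero]
    intro k _
    by_cases h1 : f i = k
    · have : f j ≠ k := fun hc => hne (h1.trans hc.symm)
      simp [this]
    · simp [h1]

private lemma posDef_submatrix {T : Matrix m m ℂ} (hT : T.PosDef) {f : n → m}
    (hf : Function.Injective f) : (T.submatrix f f).PosDef := by
  exact hT.submatrix hf

private lemma key {T : Matrix m m ℂ} (hT : T.PosDef) {f : n → m} (hf : Function.Injective f) :
    ((T⁻¹).submatrix f f - (T.submatrix f f)⁻¹).PosSemidef := by
  set A := T.submatrix f f with hAdef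
  have hA : A.PosDef := posDef_submatrix hT hf
  set P := Pmat f with hP
  set C := T⁻¹ * P - P * A⁻¹ with hC
  have hTinv : T⁻¹ᴴ = T⁻¹ := hT.isHermitian.inv.eq
  have hAinv : A⁻¹ᴴ = A⁻¹ := hA.isHermitian.inv.eq
  have hT2 : T * T⁻¹ = 1 := Matrix.mul_nonsing_inv T hT.det_pos.ne'.isUnit
  have hA1 : A⁻¹ * A = 1 := Matrix.nonsing_inv_mul A hA.det_pos.ne'.isUnit
  have hPP : Pᴴ * P = 1 := Pmat_conj_mul_self hf
  have l2 : ∀ X : Matrix m n ℂ, T * (T⁻¹ * X) = X := fun X => by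
    rw [← Matrix.mul_assoc, hT2, Matrix.one_mul]
  have l3 : ∀ X : Matrix n n ℂ, Pᴴ * (P * X) = X := fun X => by
    rw [← Matrix.mul_assoc, hPP, Matrix.one_mul]
  have hT1 : T⁻¹ * T = 1 := Matrix.nonsing_inv_mul T hT.det_pos.ne'.isUnit
  have l2' : ∀ X : Matrix m n ℂ, T⁻¹ * (T * X) = X := fun X => by
    rw [← Matrix.mul_assoc, hT1, Matrix.one_mul]
  have l4 : ∀ X : Matrix n n ℂ, Pᴴ * (T * (P * X)) = A * X := fun X => by
    rw [← Matrix.mul_assoc T P X, ← Matrix.mul_assoc, ← Matrix.mul_assoc, Pmat_conj_mul f T]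
  have l5 : ∀ X : Matrix n n ℂ, A⁻¹ * (A * X) = X := fun X => by
    rw [← Matrix.mul_assoc, hA1, Matrix.one_mul]
  have lsub : Pᴴ * (T⁻¹ * P) = (T⁻¹).submatrix f f := by
    rw [← Matrix.mul_assoc, Pmat_conj_mul f T⁻¹]
  have hmain : (T⁻¹).submatrix f f - A⁻¹ = Cᴴ * T * C := by
    simp only [hC, Matrix.conjTranspose_sub, Matrix.conjTranspose_mul, hTinv, hAinv,
      Matrix.sub_mul, Matrix.mul_sub, Matrix.mul_assoc, l2, l2', l3, l4, l5, lsub, hPP,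
      Matrix.mul_one]
    abel
  rw [hmain]
  exact hT.posSemidef.conjTranspose_mul_mul_same C
end Aux

theorem stmt_6 {E : Type*} [Fintype E] [DecidableEq E]
    (T : Matrix E E ℂ) (hT : T.PosDef)
    (Λ Δ : Finset E) (hΛΔ : Λ ⊆ Δ) :
    (((((T.submatrix (fun i : ↥Δ => (i : E)) (fun i : ↥Δ => (i : E)))⁻¹).submatrix
        (fun i : ↥Λ => (⟨(i : E), hΛΔ i.2⟩ : ↥Δ)) (fun i : ↥Λ => (⟨(i : E), hΛΔ i.2⟩ : ↥Δ)))
      - (T.submatrix (fun i : ↥Λ => (i : E)) (fun i : ↥Λ => (i : E)))⁻¹).PosSemidef)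
    ∧ (((T⁻¹).submatrix (fun i : ↥Λ => (i : E)) (fun i : ↥Λ => (i : E))
      - (((T.submatrix (fun i : ↥Δ => (i : E)) (fun i : ↥Δ => (i : E)))⁻¹).submatrix
        (fun i : ↥Λ => (⟨(i : E), hΛΔ i.2⟩ : ↥Δ)) (fun i : ↥Λ => (⟨(i : E), hΛΔ i.2⟩ : ↥Δ)))).PosSemidef) := by
  set g : ↥Δ → E := fun i => (i : E) with hg
  set f : ↥Λ → ↥Δ := fun i => (⟨(i : E), hΛΔ i.2⟩ : ↥Δ) with hf
  have hginj : Function.Injective g := Subtype.val_injective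
  have hfinj : Function.Injective f := fun a b hab => Subtype.ext (congrArg Subtype.val hab :)
  have hTΔ : (T.submatrix g g).PosDef := posDef_submatrix hT hginj
  have hcomp : (T.submatrix g g).submatrix f f
      = T.submatrix (fun i : ↥Λ => (i : E)) (fun i : ↥Λ => (i : E)) := by
    rw [Matrix.submatrix_submatrix]; rfl
  constructor
  · have h := key hTΔ hfinj
    rwa [hcomp] at h
  · have h := (key hT hginj).submatrix f
    rwa [Matrix.submatrix_sub, Pi.sub_apply, Pi.sub_apply, Matrix.submatrix_submatrix] at h
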